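/- Monotonicity of dissociation under refinement: let Δ = (y1,...,ym) and Δ' = (y1',...,ym') be two dissociations of the same positive m-partite DNF (each yi, yi' a set of extra variables attached to the i-th block). If yi' ⊆ yi for all i, then for every assignment of probabilities P[φ^Δ] ≥ P[φ^Δ'] ≥ P[φ]. -/

import Mathlib

open Finset

/-- The probability of a dissociated `m`-partite positive DNF.  The terms are indexed by the
finite type `A`; the term `a` uses, in block `i`, the variable with key `v i a : K i`
(probability `p i (v i a)`), dissociated into the independent copy indexed by
`w i a : L i`.  All copies of all variables are mutually independent, and a copy indexed by
`(k, l)` is true with probability `p i k`.  The probability is computed by summing the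
product weights of all satisfying assignments `ω`. -/
noncomputable def dissProb {m : ℕ} {A : Type*} [Fintype A]
    (K : Fin m → Type*) [∀ i, Fintype (K i)] [∀ i, DecidableEq (K i)]
    (L : Fin m → Type*) [∀ i, Fintype (L i)] [∀ i, DecidableEq (L i)]
    (v : ∀ i, A → K i) (w : ∀ i, A → L i) (p : ∀ i, K i → ℝ) : ℝ :=
  ∑ ω ∈ Finset.univ.filter
      (fun ω : ∀ i, K i → L i → Bool => ∃ a : A, ∀ i, ω i (v i a) (w i a) = true),
    ∏ i, ∏ k, ∏ l, (if ω i k l then p i k else 1 - p i k)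

/-! ### Auxiliary development -/

/-- Weight of a Boolean assignment. -/
noncomputable def wgt {C : Type*} [Fintype C] (q : C → ℝ) (η : C → Bool) : ℝ :=
  ∏ c, (if η c then q c else 1 - q c)

/-- Flat-coordinate version of the DNF probability. -/
noncomputable def UProb {C : Type*} [Fintype C] [DecidableEq C] {A : Type*} [Fintype A]
    (q : C → ℝ) (T : A → Finset C) : ℝ :=
  ∑ η ∈ Finset.univ.filter (fun η : C → Bool => ∃ a : A, ∀ c ∈ T a, η c = true),
    wgt q η

lemma uprob_eq_sum_ite {C : Type*} [Fintype C] [DecidableEq C] {A : Type*} [Fintype A]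
    (q : C → ℝ) (T : A → Finset C) :
    UProb q T = ∑ η : C → Bool,
      (if (∃ a : A, ∀ c ∈ T a, η c = true) then wgt q η else 0) := by
  rw [UProb, Finset.sum_filter]

/-- Constrained sum over Boolean assignments of the product weight. -/
lemma sumc {C : Type*} [Fintype C] [DecidableEq C] (q : C → ℝ) (S : Finset C) (b : C → Bool) :
    ∑ η : C → Bool, (if (∀ c ∈ S, η c = b c) then wgt q η else 0)
      = ∏ c ∈ S, (if b c then q c else 1 - q c) := by
  classical
  have hset : ∀ η : C → Bool,
      (∀ c ∈ S, η c = b c) ↔ η ∈ Fintype.piFinset (fun c => if c ∈ S then {b c} else Finset.univ) := by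
    intro η
    rw [Fintype.mem_piFinset]
    constructor
    · intro h c
      by_cases hc : c ∈ S
      · simp [hc, h c hc]
      · simp [hc]
    · intro h c hc
      have := h c
      simpa [hc] using this
  calc ∑ η : C → Bool, (if (∀ c ∈ S, η c = b c) then wgt q η else 0)
      = ∑ η ∈ Finset.univ.filter (fun η : C → Bool => ∀ c ∈ S, η c = b c), wgt q η := by
        rw [Finset.sum_filter]
    _ = ∑ η ∈ Fintype.piFinset (fun c => if c ∈ S then {b c} else Finset.univ), wgt q η := by
        apply Finset.sum_congr _ (fun _ _ => rfl)
        ext η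
        simp only [Finset.mem_filter, Finset.mem_univ, true_and]
        exact hset η
    _ = ∏ c, ∑ x ∈ (if c ∈ S then ({b c} : Finset Bool) else Finset.univ),
          (if x then q c else 1 - q c) := by
        rw [Finset.prod_univ_sum]
        rfl
    _ = ∏ c, (if c ∈ S then (if b c then q c else 1 - q c) else 1) := by
        apply Finset.prod_congr rfl
        intro c _
        by_cases hc : c ∈ S
        · simp [hc]
        · simp only [hc, if_false]
          rw [Fintype.sum_bool]
          norm_num
    _ = ∏ c ∈ S, (if b c then q c else 1 - q c) := Fintype.prod_ite_mem S _

/-- Reindexing the coordinates along an injection does not change the probability. -/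
lemma uprob_reindex {C C' A : Type*} [Fintype C] [DecidableEq C] [Fintype C'] [DecidableEq C']
    [Fintype A] (q : C → ℝ) (q' : C' → ℝ) (j : C → C') (hj : Function.Injective j)
    (hq : ∀ c, q' (j c) = q c) (T : A → Finset C) :
    UProb q' (fun a => (T a).image j) = UProb q T := by
  classical
  rw [uprob_eq_sum_ite, uprob_eq_sum_ite]
  rw [← Finset.sum_fiberwise Finset.univ
    (fun η' : C' → Bool => (fun c => η' (j c) : C → Bool))
    (fun η' => if (∃ a : A, ∀ c ∈ (T a).image j, η' c = true) then wgt q' η' else 0)]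
  apply Finset.sum_congr rfl
  intro η _
  have hev : ∀ η' : C' → Bool, (fun c => η' (j c)) = η →
      ((∃ a : A, ∀ c ∈ (T a).image j, η' c = true) ↔ (∃ a : A, ∀ c ∈ T a, η c = true)) := by
    intro η' hη'
    apply exists_congr; intro a
    rw [Finset.forall_mem_image]
    constructor
    · intro h c hc
      rw [← congrFun hη' c]; exact h hc
    · intro h c hc
      rw [congrFun hη' c]; exact h c hc
  by_cases hE : (∃ a : A, ∀ c ∈ T a, η c = true)
  · rw [if_pos hE]
    have : ∀ η' ∈ Finset.univ.filter (fun η' : C' → Bool => (fun c => η' (j c)) = η),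
        (if (∃ a : A, ∀ c ∈ (T a).image j, η' c = true) then wgt q' η' else 0) = wgt q' η' := by
      intro η' hη'
      rw [Finset.mem_filter] at hη'
      rw [if_pos ((hev η' hη'.2).mpr hE)]
    rw [Finset.sum_congr rfl this]
    set b : C' → Bool := fun c' => if h : ∃ c, j c = c' then η h.choose else false with hb
    have hbj : ∀ c, b (j c) = η c := by
      intro c
      have hex : ∃ c₀, j c₀ = j c := ⟨c, rfl⟩
      have := hex.choose_spec
      have hcc : hex.choose = c := hj this
      simp only [hb, dif_pos hex, hcc]
    have hcond : ∀ η' : C' → Bool,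
        ((fun c => η' (j c)) = η) ↔ (∀ c' ∈ Finset.univ.image j, η' c' = b c') := by
      intro η'
      constructor
      · intro hη' c' hc'
        obtain ⟨c, _, rfl⟩ := Finset.mem_image.mp hc'
        rw [hbj c, ← congrFun hη' c]
      · intro h
        funext c
        rw [h (j c) (Finset.mem_image_of_mem j (Finset.mem_univ c)), hbj c]
    calc ∑ η' ∈ Finset.univ.filter (fun η' : C' → Bool => (fun c => η' (j c)) = η), wgt q' η'
        = ∑ η' : C' → Bool, (if (∀ c' ∈ Finset.univ.image j, η' c' = b c') then wgt q' η' else 0) := by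
          rw [Finset.sum_filter]
          apply Finset.sum_congr rfl
          intro η' _
          exact if_congr (hcond η') rfl rfl
      _ = ∏ c' ∈ Finset.univ.image j, (if b c' then q' c' else 1 - q' c') := sumc q' _ b
      _ = ∏ c, (if b (j c) then q' (j c) else 1 - q' (j c)) :=
          Finset.prod_image (fun x _ y _ h => hj h)
      _ = wgt q η := by
          apply Finset.prod_congr rfl
          intro c _
          rw [hbj c, hq c]
  · rw [if_neg hE]
    apply Finset.sum_eq_zero
    intro η' hη'
    rw [Finset.mem_filter] at hη'
    rw [if_neg (fun h => hE ((hev η' hη'.2).mp h))]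

lemma prod_one_sub_image_le {C : Type*} [DecidableEq C] (q : C → ℝ)
    (hq : ∀ c, 0 ≤ q c ∧ q c ≤ 1) (h : C → C) (hqh : ∀ c, q (h c) = q c) (D : Finset C) :
    ∏ c ∈ D, (1 - q c) ≤ ∏ c ∈ D.image h, (1 - q c) := by
  classical
  induction D using Finset.induction_on with
  | empty => simp
  | insert _ _ ha ih =>
    rename_i a s
    rw [Finset.image_insert, Finset.prod_insert ha]
    by_cases hm : h a ∈ s.image h
    · rw [Finset.insert_eq_self.mpr hm]
      calc (1 - q a) * ∏ c ∈ s, (1 - q c) ≤ 1 * ∏ c ∈ s, (1 - q c) := by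
            apply mul_le_mul_of_nonneg_right (by linarith [(hq a).1])
            exact Finset.prod_nonneg (fun c _ => by linarith [(hq c).2])
        _ = ∏ c ∈ s, (1 - q c) := one_mul _
        _ ≤ _ := ih
    · rw [Finset.prod_insert hm, hqh]
      exact mul_le_mul_of_nonneg_left ih (by linarith [(hq a).2])

/-- Merging copies of a variable (along `h`, preserving probabilities) can only decrease the
probability of a positive DNF, provided the merged coordinates are fresh (not used in the
remainders `R`). -/
lemma uprob_merge {C A : Type*} [Fintype C] [DecidableEq C] [Fintype A]
    (q : C → ℝ) (hq : ∀ c, 0 ≤ q c ∧ q c ≤ 1)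
    (u : A → C) (h : C → C) (hqh : ∀ c, q (h c) = q c)
    (R : A → Finset C)
    (hR : ∀ a b, u a ∉ R b) (hRh : ∀ a b, h (u a) ∉ R b) :
    UProb q (fun a => insert (h (u a)) (R a)) ≤ UProb q (fun a => insert (u a) (R a)) := by
  classical
  set B : Finset C := (Finset.univ.image u) ∪ (Finset.univ.image fun a => h (u a)) with hB
  have hRB : ∀ (b : A) (c : C), c ∈ R b → c ∉ B := by
    intro b c hc hcB
    rw [hB, Finset.mem_union] at hcB
    rcases hcB with hcB | hcB
    · obtain ⟨a, _, rfl⟩ := Finset.mem_image.mp hcB; exact hR a b hc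
    · obtain ⟨a, _, rfl⟩ := Finset.mem_image.mp hcB; exact hRh a b hc
  set z : (C → Bool) → (C → Bool) := fun η c => if c ∈ B then false else η c with hz
  have inner : ∀ (ρ : C → Bool), (∀ c ∈ B, ρ c = false) → ∀ (u' : A → C), (∀ a, u' a ∈ B) →
      ∑ η ∈ Finset.univ.filter (fun η : C → Bool => z η = ρ),
        (if (∃ a : A, ∀ c ∈ insert (u' a) (R a), η c = true) then wgt q η else 0)
      = (∏ c ∈ Bᶜ, (if ρ c then q c else 1 - q c)) *
        (1 - ∏ c ∈ (Finset.univ.filter (fun a : A => ∀ c ∈ R a, ρ c = true)).image u',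
          (1 - q c)) := by
    intro ρ hρ u' hu'
    set Q : A → Prop := fun a => ∀ c ∈ R a, ρ c = true with hQ
    set D : Finset C := (Finset.univ.filter Q).image u' with hD
    have hDB : ∀ c ∈ D, c ∈ B := by
      intro c hc
      obtain ⟨a, _, rfl⟩ := Finset.mem_image.mp hc
      exact hu' a
    have hfib : ∀ η : C → Bool, (z η = ρ) ↔ (∀ c ∈ Bᶜ, η c = ρ c) := by
      intro η
      constructor
      · intro hη c hc
        have := congrFun hη c
        rw [hz] at this
        simp only [Finset.mem_compl.mp hc, if_neg] at this
        rw [← this]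
        simp [Finset.mem_compl.mp hc]
      · intro hc
        funext c
        by_cases hcB : c ∈ B
        · simp [hz, hcB, (hρ c hcB)]
        · simp [hz, hcB, hc c (Finset.mem_compl.mpr hcB)]
    have hev : ∀ η : C → Bool, z η = ρ →
        ((∃ a : A, ∀ c ∈ insert (u' a) (R a), η c = true) ↔ (∃ c ∈ D, η c = true)) := by
      intro η hη
      have hoff : ∀ c, c ∉ B → η c = ρ c := fun c hc => (hfib η).mp hη c (Finset.mem_compl.mpr hc)
      constructor
      · rintro ⟨a, ha⟩
        refine ⟨u' a, ?_, ha (u' a) (Finset.mem_insert_self _ _)⟩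
        rw [hD, Finset.mem_image]
        refine ⟨a, ?_, rfl⟩
        rw [Finset.mem_filter]
        refine ⟨Finset.mem_univ a, fun c hc => ?_⟩
        rw [← hoff c (hRB a c hc)]
        exact ha c (Finset.mem_insert_of_mem hc)
      · rintro ⟨c, hcD, hc⟩
        obtain ⟨a, haQ, rfl⟩ := Finset.mem_image.mp hcD
        rw [Finset.mem_filter] at haQ
        refine ⟨a, fun c' hc' => ?_⟩
        rcases Finset.mem_insert.mp hc' with rfl | hc'
        · exact hc
        · rw [hoff c' (hRB a c' hc')]
          exact haQ.2 c' hc'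
    have split : ∑ η ∈ Finset.univ.filter (fun η : C → Bool => z η = ρ),
        (if (∃ a : A, ∀ c ∈ insert (u' a) (R a), η c = true) then wgt q η else 0)
      = (∑ η : C → Bool, (if (∀ c ∈ Bᶜ, η c = ρ c) then wgt q η else 0))
        - (∑ η : C → Bool,
            (if (∀ c ∈ Bᶜ ∪ D, η c = (if c ∈ D then false else ρ c)) then wgt q η else 0)) := by
      rw [Finset.sum_filter, ← Finset.sum_sub_distrib]
      apply Finset.sum_congr rfl
      intro η _
      by_cases hP : z η = ρ
      · rw [if_pos ((hfib η).mp hP)]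
        by_cases hEx : ∃ c ∈ D, η c = true
        · rw [if_pos hP, if_pos ((hev η hP).mpr hEx)]
          have : ¬ (∀ c ∈ Bᶜ ∪ D, η c = (if c ∈ D then false else ρ c)) := by
            intro hall
            obtain ⟨c, hcD, hc⟩ := hEx
            have := hall c (Finset.mem_union_right _ hcD)
            rw [if_pos hcD] at this
            rw [this] at hc
            exact Bool.false_ne_true hc
          rw [if_neg this]
          ring
        · rw [if_pos hP, if_neg (fun h => hEx ((hev η hP).mp h))]
          have : (∀ c ∈ Bᶜ ∪ D, η c = (if c ∈ D then false else ρ c)) := by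
            intro c hc
            by_cases hcD : c ∈ D
            · rw [if_pos hcD]
              cases hηc : η c with
              | false => rfl
              | true => exact absurd ⟨c, hcD, hηc⟩ hEx
            · rw [if_neg hcD]
              rcases Finset.mem_union.mp hc with hc | hc
              · exact (hfib η).mp hP c hc
              · exact absurd hc hcD
          rw [if_pos this]
          ring
      · rw [if_neg hP, if_neg (fun h => hP ((hfib η).mpr h))]
        have : ¬ (∀ c ∈ Bᶜ ∪ D, η c = (if c ∈ D then false else ρ c)) := by
          intro hall
          apply hP
          apply (hfib η).mpr
          intro c hc
          have := hall c (Finset.mem_union_left _ hc)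
          rwa [if_neg (fun hcD => Finset.mem_compl.mp hc (hDB c hcD))] at this
        rw [if_neg this]
        ring
    rw [split, sumc, sumc]
    have hdisj : Disjoint Bᶜ D := by
      rw [Finset.disjoint_left]
      intro c hc hcD
      exact Finset.mem_compl.mp hc (hDB c hcD)
    rw [Finset.prod_union hdisj]
    have h1 : ∏ c ∈ Bᶜ, (if (if c ∈ D then false else ρ c) then q c else 1 - q c)
        = ∏ c ∈ Bᶜ, (if ρ c then q c else 1 - q c) := by
      apply Finset.prod_congr rfl
      intro c hc
      rw [if_neg (fun hcD => Finset.mem_compl.mp hc (hDB c hcD))]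
    have h2 : ∏ c ∈ D, (if (if c ∈ D then false else ρ c) then q c else 1 - q c)
        = ∏ c ∈ D, (1 - q c) := by
      apply Finset.prod_congr rfl
      intro c hc
      rw [if_pos hc]
      rfl
    rw [h1, h2]
    ring
  rw [uprob_eq_sum_ite, uprob_eq_sum_ite]
  rw [← Finset.sum_fiberwise Finset.univ z
    (fun η => if (∃ a : A, ∀ c ∈ insert (h (u a)) (R a), η c = true) then wgt q η else 0)]
  rw [← Finset.sum_fiberwise Finset.univ z
    (fun η => if (∃ a : A, ∀ c ∈ insert (u a) (R a), η c = true) then wgt q η else 0)]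
  apply Finset.sum_le_sum
  intro ρ _
  by_cases hρ : ∀ c ∈ B, ρ c = false
  · rw [inner ρ hρ u (fun a => Finset.mem_union_left _ (Finset.mem_image_of_mem u (Finset.mem_univ a)))]
    rw [inner ρ hρ (fun a => h (u a))
      (fun a => Finset.mem_union_right _ (Finset.mem_image_of_mem _ (Finset.mem_univ a)))]
    apply mul_le_mul_of_nonneg_left _ (Finset.prod_nonneg (fun c _ => by
      by_cases hc : ρ c <;> simp [hc] <;> linarith [(hq c).1, (hq c).2]))
    apply sub_le_sub_left
    have himg : (Finset.univ.filter (fun a : A => ∀ c ∈ R a, ρ c = true)).image (fun a => h (u a))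
        = ((Finset.univ.filter (fun a : A => ∀ c ∈ R a, ρ c = true)).image u).image h := by
      rw [Finset.image_image]
      rfl
    rw [himg]
    exact prod_one_sub_image_le q hq h hqh _
  · push_neg at hρ
    obtain ⟨c₀, hc₀B, hc₀⟩ := hρ
    have hempty : Finset.univ.filter (fun η : C → Bool => z η = ρ) = ∅ := by
      rw [Finset.filter_eq_empty_iff]
      intro η _
      intro hη
      apply hc₀
      rw [← congrFun hη c₀, hz]
      simp [hc₀B]
    rw [hempty]
    simp

/-- Dissociating one block at a time: the fully dissociated (`Sum.inl ∘ w`) version dominates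
the merged (`Sum.inr ∘ g ∘ w`) version. -/
lemma uprob_chain {m : ℕ} {A : Type*} [Fintype A]
    (K : Fin m → Type*) [∀ i, Fintype (K i)] [∀ i, DecidableEq (K i)]
    (L : Fin m → Type*) [∀ i, Fintype (L i)] [∀ i, DecidableEq (L i)]
    (L' : Fin m → Type*) [∀ i, Fintype (L' i)] [∀ i, DecidableEq (L' i)]
    (v : ∀ i, A → K i) (w : ∀ i, A → L i) (g : ∀ i, L i → L' i)
    (p : ∀ i, K i → ℝ) (hp : ∀ i k, 0 ≤ p i k ∧ p i k ≤ 1) :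
    UProb (C := Σ i, K i × (L i ⊕ L' i)) (fun c => p c.1 c.2.1)
        (fun a => Finset.univ.image (fun i => ⟨i, v i a, Sum.inr (g i (w i a))⟩))
      ≤ UProb (C := Σ i, K i × (L i ⊕ L' i)) (fun c => p c.1 c.2.1)
        (fun a => Finset.univ.image (fun i => ⟨i, v i a, Sum.inl (w i a)⟩)) := by
  classical
  set C := (Σ i, K i × (L i ⊕ L' i)) with hC
  set qq : C → ℝ := fun c => p c.1 c.2.1 with hqq
  set Tt : ℕ → A → Finset C := fun t a => Finset.univ.image
    (fun i => (⟨i, v i a, if (i : ℕ) < t then Sum.inr (g i (w i a)) else Sum.inl (w i a)⟩ : C))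
    with hTt
  have step : ∀ t : ℕ, UProb qq (Tt (t + 1)) ≤ UProb qq (Tt t) := by
    intro t
    by_cases ht : t < m
    · set t' : Fin m := ⟨t, ht⟩ with ht'
      set u : A → C := fun a => ⟨t', v t' a, Sum.inl (w t' a)⟩ with hu
      set h : C → C := fun c => ⟨c.1, c.2.1, Sum.elim (fun l => Sum.inr (g c.1 l)) Sum.inr c.2.2⟩
        with hh
      set R : A → Finset C := fun a => (Finset.univ.erase t').image
        (fun i => (⟨i, v i a, if (i : ℕ) < t then Sum.inr (g i (w i a)) else Sum.inl (w i a)⟩ : C))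
        with hR
      have hfst : ∀ (a b : A) (c : C), c ∈ R b → c.1 ≠ t' := by
        intro a b c hc
        obtain ⟨i, hi, rfl⟩ := Finset.mem_image.mp hc
        exact Finset.ne_of_mem_erase hi
      have hTt_t : Tt t = fun a => insert (u a) (R a) := by
        funext a
        simp only [hTt, hR]
        conv_lhs => rw [← Finset.insert_erase (Finset.mem_univ t')]
        rw [Finset.image_insert]
        congr 1
        rw [hu, ht']
        simp
      have hTt_t1 : Tt (t + 1) = fun a => insert (h (u a)) (R a) := by
        funext a
        simp only [hTt, hR]
        conv_lhs => rw [← Finset.insert_erase (Finset.mem_univ t')]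
        rw [Finset.image_insert]
        have h1 : (⟨t', v t' a, if (t' : ℕ) < t + 1 then Sum.inr (g t' (w t' a))
            else Sum.inl (w t' a)⟩ : C) = h (u a) := by
          rw [hh, hu]
          simp [ht']
        rw [h1]
        congr 1
        apply Finset.image_congr
        intro i hi
        have hne : (i : ℕ) ≠ t := by
          intro hcon
          exact Finset.ne_of_mem_erase hi (Fin.ext hcon)
        have : ((i : ℕ) < t + 1) = ((i : ℕ) < t) := by
          apply propext
          constructor
          · intro hlt
            rcases Nat.lt_succ_iff_lt_or_eq.mp hlt with hlt | heq
            · exact hlt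
            · exact absurd heq hne
          · exact fun hlt => Nat.lt_succ_of_lt hlt
        simp only [this]
      rw [hTt_t, hTt_t1]
      apply uprob_merge qq (fun c => hp c.1 c.2.1) u h (fun c => rfl) R
      · intro a b hmem
        exact hfst a b (u a) hmem rfl
      · intro a b hmem
        exact hfst a b (h (u a)) hmem rfl
    · have : Tt (t + 1) = Tt t := by
        funext a
        simp only [hTt]
        apply Finset.image_congr
        intro i _
        have h1 : (i : ℕ) < t := lt_of_lt_of_le i.isLt (Nat.le_of_not_lt ht)
        simp [h1, Nat.lt_succ_of_lt h1]
      rw [this]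
  have mono : ∀ t : ℕ, UProb qq (Tt t) ≤ UProb qq (Tt 0) := by
    intro t
    induction t with
    | zero => exact le_refl _
    | succ n ih => exact (step n).trans ih
  have h0 : Tt 0 = fun a => Finset.univ.image (fun i => (⟨i, v i a, Sum.inl (w i a)⟩ : C)) := by
    funext a
    simp only [hTt]
    apply Finset.image_congr
    intro i _
    simp
  have hm : Tt m = fun a => Finset.univ.image (fun i => (⟨i, v i a, Sum.inr (g i (w i a))⟩ : C)) := by
    funext a
    simp only [hTt]
    apply Finset.image_congr
    intro i _
    simp [i.isLt]
  calc UProb qq (fun a => Finset.univ.image (fun i => (⟨i, v i a, Sum.inr (g i (w i a))⟩ : C)))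
      = UProb qq (Tt m) := by rw [hm]
    _ ≤ UProb qq (Tt 0) := mono m
    _ = _ := by rw [h0]

/-- The dissociated DNF probability in its flat-coordinate form. -/
lemma dissProb_eq_uprob {m : ℕ} {A : Type*} [Fintype A]
    (K : Fin m → Type*) [∀ i, Fintype (K i)] [∀ i, DecidableEq (K i)]
    (L : Fin m → Type*) [∀ i, Fintype (L i)] [∀ i, DecidableEq (L i)]
    (v : ∀ i, A → K i) (w : ∀ i, A → L i) (p : ∀ i, K i → ℝ) :
    dissProb K L v w p = UProb (C := Σ i, K i × L i) (fun c => p c.1 c.2.1)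
      (fun a => Finset.univ.image (fun i => ⟨i, v i a, w i a⟩)) := by
  classical
  rw [dissProb, uprob_eq_sum_ite, Finset.sum_filter]
  apply Fintype.sum_bijective
    (fun ω : ∀ i, K i → L i → Bool => (fun c : Σ i, K i × L i => ω c.1 c.2.1 c.2.2))
  · constructor
    · intro ω ω' hh
      funext i k l
      exact congrFun hh ⟨i, k, l⟩
    · intro η
      exact ⟨fun i k l => η ⟨i, k, l⟩, by funext c; rcases c with ⟨i, k, l⟩; rfl⟩
  · intro ω
    apply if_congr
    · apply exists_congr; intro a
      rw [Finset.forall_mem_image]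
      simp only [Finset.mem_univ, true_implies]
    · rw [wgt, ← Finset.univ_sigma_univ, Finset.prod_sigma]
      apply Finset.prod_congr rfl
      intro i _
      rw [Fintype.prod_prod_type]
    · rfl

/-- Key inequality: if the copy labels factor through `g`, the probability is smaller. -/
lemma dissProb_factor_le {m : ℕ} {A : Type*} [Fintype A]
    (K : Fin m → Type*) [∀ i, Fintype (K i)] [∀ i, DecidableEq (K i)]
    (L : Fin m → Type*) [∀ i, Fintype (L i)] [∀ i, DecidableEq (L i)]
    (L' : Fin m → Type*) [∀ i, Fintype (L' i)] [∀ i, DecidableEq (L' i)]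
    (v : ∀ i, A → K i) (w : ∀ i, A → L i) (g : ∀ i, L i → L' i)
    (p : ∀ i, K i → ℝ) (hp : ∀ i k, 0 ≤ p i k ∧ p i k ≤ 1) :
    dissProb K L' v (fun i a => g i (w i a)) p ≤ dissProb K L v w p := by
  classical
  rw [dissProb_eq_uprob, dissProb_eq_uprob]
  have hjl : Function.Injective
      (fun c : Σ i, K i × L i => (⟨c.1, c.2.1, Sum.inl c.2.2⟩ : Σ i, K i × (L i ⊕ L' i))) := by
    intro c c' hcc
    rcases c with ⟨i, k, l⟩; rcases c' with ⟨i', k', l'⟩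
    obtain ⟨rfl, h2⟩ := Sigma.mk.inj_iff.mp hcc
    rw [heq_iff_eq, Prod.mk.injEq] at h2
    obtain ⟨rfl, h3⟩ := h2
    rw [Sum.inl.injEq] at h3
    subst h3; rfl
  have hjr : Function.Injective
      (fun c : Σ i, K i × L' i => (⟨c.1, c.2.1, Sum.inr c.2.2⟩ : Σ i, K i × (L i ⊕ L' i))) := by
    intro c c' hcc
    rcases c with ⟨i, k, l⟩; rcases c' with ⟨i', k', l'⟩
    obtain ⟨rfl, h2⟩ := Sigma.mk.inj_iff.mp hcc
    rw [heq_iff_eq, Prod.mk.injEq] at h2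
    obtain ⟨rfl, h3⟩ := h2
    rw [Sum.inr.injEq] at h3
    subst h3; rfl
  have h1 := uprob_reindex (A := A)
      (q := fun c : Σ i, K i × L i => p c.1 c.2.1)
      (q' := fun c : Σ i, K i × (L i ⊕ L' i) => p c.1 c.2.1)
      (fun c : Σ i, K i × L i => (⟨c.1, c.2.1, Sum.inl c.2.2⟩ : Σ i, K i × (L i ⊕ L' i)))
      hjl (fun c => rfl)
      (fun a => Finset.univ.image (fun i => ⟨i, v i a, w i a⟩))
  have h2 := uprob_reindex (A := A)
      (q := fun c : Σ i, K i × L' i => p c.1 c.2.1)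
      (q' := fun c : Σ i, K i × (L i ⊕ L' i) => p c.1 c.2.1)
      (fun c : Σ i, K i × L' i => (⟨c.1, c.2.1, Sum.inr c.2.2⟩ : Σ i, K i × (L i ⊕ L' i)))
      hjr (fun c => rfl)
      (fun a => Finset.univ.image (fun i => ⟨i, v i a, g i (w i a)⟩))
  rw [← h1, ← h2]
  have e1 : (fun a => ((Finset.univ.image (fun i => (⟨i, v i a, w i a⟩ : Σ i, K i × L i))).image
      (fun c : Σ i, K i × L i => (⟨c.1, c.2.1, Sum.inl c.2.2⟩ : Σ i, K i × (L i ⊕ L' i)))))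
      = fun a => Finset.univ.image
        (fun i => (⟨i, v i a, Sum.inl (w i a)⟩ : Σ i, K i × (L i ⊕ L' i))) := by
    funext a
    rw [Finset.image_image]
    rfl
  have e2 : (fun a => ((Finset.univ.image (fun i => (⟨i, v i a, g i (w i a)⟩ : Σ i, K i × L' i))).image
      (fun c : Σ i, K i × L' i => (⟨c.1, c.2.1, Sum.inr c.2.2⟩ : Σ i, K i × (L i ⊕ L' i)))))
      = fun a => Finset.univ.image
        (fun i => (⟨i, v i a, Sum.inr (g i (w i a))⟩ : Σ i, K i × (L i ⊕ L' i))) := by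
    funext a
    rw [Finset.image_image]
    rfl
  rw [e1, e2]
  exact uprob_chain K L L' v w g p hp

/-- Monotonicity of dissociation under refinement: if the dissociation `w`
(copy index `L`) refines the dissociation `w'` (copy index `L'`), i.e. `w'` factors through
`w` via maps `g i`, then for every assignment of probabilities `p i k ∈ [0,1]`,
`P[φ^Δ] ≥ P[φ^Δ'] ≥ P[φ]`, where `P[φ]` is the probability of the original (trivial,
undissociated) DNF. -/
theorem dissociation_refinement_monotone {m : ℕ} {A : Type*} [Fintype A]
    (K : Fin m → Type*) [∀ i, Fintype (K i)] [∀ i, DecidableEq (K i)]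
    (L L' : Fin m → Type*) [∀ i, Fintype (L i)] [∀ i, DecidableEq (L i)]
    [∀ i, Fintype (L' i)] [∀ i, DecidableEq (L' i)]
    (v : ∀ i, A → K i) (w : ∀ i, A → L i) (w' : ∀ i, A → L' i)
    (p : ∀ i, K i → ℝ) (hp : ∀ i k, 0 ≤ p i k ∧ p i k ≤ 1)
    (g : ∀ i, L i → L' i) (hg : ∀ i a, w' i a = g i (w i a)) :
    dissProb K L' v w' p ≤ dissProb K L v w p ∧
    dissProb K (fun _ => Unit) v (fun _ _ => ()) p ≤ dissProb K L' v w' p := by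
  constructor
  · have hw' : w' = fun i a => g i (w i a) := by
      funext i a; exact hg i a
    rw [hw']
    exact dissProb_factor_le K L L' v w g p hp
  · exact dissProb_factor_le K L' (fun _ => Unit) v w' (fun _ _ => ()) p hp
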